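/- Variance inequality for asymptotic super-efficiency in the homoscedastic case: if σ²(w) := Var(Y | A=1, W=w) and both σ² and Q̄₀ are measurable with respect to σ(Q̄₀(W)), then τ₀² = E[σ²(W)/Ḡ₀(W|Q̄₀)] + Var(Q̄₀(W)) ≤ E[σ²(W)/Ḡ₀(W)] + Var(Q̄₀(W)) = σ₀², where Ḡ₀(·|Q̄₀) = E[Ḡ₀(W) | Q̄₀(W)]. -/

import Mathlib

open MeasureTheory ProbabilityTheory

lemma SEVD_intg {Ω : Type*} [MeasurableSpace Ω] (P : Measure Ω) [IsFiniteMeasure P]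
    {f : Ω → ℝ} (hm : AEStronglyMeasurable f P) {C : ℝ}
    (hb : ∀ᵐ ω ∂P, |f ω| ≤ C) : Integrable f P :=
  Integrable.mono' (integrable_const C) hm (by simpa [Real.norm_eq_abs] using hb)

lemma SEVD_key {Ω : Type*} {m : MeasurableSpace Ω} [m0 : MeasurableSpace Ω] (hm : m ≤ m0)
    (P : Measure Ω) [IsProbabilityMeasure P] {h f g : Ω → ℝ}
    (hh : StronglyMeasurable[m] h)
    (hhf : Integrable (fun ω => h ω * f ω) P) (hf : Integrable f P)
    (hg : g =ᵐ[P] P[f|m]) :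
    ∫ ω, h ω * f ω ∂P = ∫ ω, h ω * g ω ∂P := by
  have h1 : P[fun ω => h ω * f ω|m] =ᵐ[P] fun ω => h ω * (P[f|m]) ω :=
    condExp_mul_of_stronglyMeasurable_left hh hhf hf
  calc ∫ ω, h ω * f ω ∂P
      = ∫ ω, (P[fun ω => h ω * f ω|m]) ω ∂P :=
        (integral_condExp (m := m) (m₀ := m0) (μ := P) (f := fun ω => h ω * f ω) hm).symm
    _ = ∫ ω, h ω * g ω ∂P := integral_congr_ae (h1.trans (by
          filter_upwards [hg] with ω hω; rw [hω]))

lemma SEVD_abs_mul {a b A B : ℝ} (ha : |a| ≤ A) (hb : |b| ≤ B) : |a * b| ≤ A * B := by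
  rw [abs_mul]
  exact mul_le_mul ha hb (abs_nonneg _) (le_trans (abs_nonneg _) ha)

lemma SEVD_bnd_div {x g C δ : ℝ} (hδ : 0 < δ) (hg : δ ≤ g) (hx : |x| ≤ C) : |x / g| ≤ C / δ := by
  rw [abs_div, abs_of_pos (lt_of_lt_of_le hδ hg)]
  exact div_le_div₀ (le_trans (abs_nonneg _) hx) hx hδ hg

lemma SEVD_bnd_div2 {x g C δ : ℝ} (hδ : 0 < δ) (hg : δ ≤ g) (hx : |x| ≤ C) :
    |x / g ^ 2| ≤ C / δ ^ 2 :=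
  SEVD_bnd_div (by positivity) (pow_le_pow_left₀ (le_of_lt hδ) hg 2) hx

/-- a.e. bound on `s ∘ Q0 ∘ W`. -/
lemma SEVD_s_bound {Ω 𝓦 : Type*} [MeasurableSpace Ω] [MeasurableSpace 𝓦]
    (P : Measure Ω) [IsProbabilityMeasure P]
    (W : Ω → 𝓦) (A Y : Ω → ℝ) (hW : Measurable W) (hA : Measurable A) (hY : Measurable Y)
    (hAbin : ∀ ω, A ω = 0 ∨ A ω = 1) (hYr : ∀ ω, Y ω ∈ Set.Icc (0:ℝ) 1)
    (δ : ℝ) (hδ : 0 < δ)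
    (G0 Q0 : 𝓦 → ℝ)
    (hG0r : ∀ w, G0 w ∈ Set.Icc δ 1) (hQ0r : ∀ w, Q0 w ∈ Set.Icc (0:ℝ) 1)
    (s : ℝ → ℝ) (hs0 : ∀ x, 0 ≤ s x)
    (hs : (fun ω => (s (Q0 (W ω)) + (Q0 (W ω)) ^ 2) * G0 (W ω))
        =ᵐ[P] P[fun ω => A ω * (Y ω) ^ 2 | MeasurableSpace.comap W inferInstance]) :
    ∀ᵐ ω ∂P, s (Q0 (W ω)) ≤ 1 / δ := by
  have hAY2 : Integrable (fun ω => A ω * (Y ω) ^ 2) P := by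
    refine SEVD_intg P (hA.mul (hY.pow_const 2)).aestronglyMeasurable (C := 1)
      (Filter.Eventually.of_forall fun ω => ?_)
    have hy := hYr ω
    simp only [Set.mem_Icc] at hy
    rw [abs_le]
    rcases hAbin ω with h | h <;> rw [h] <;> constructor <;> nlinarith
  have hmono : P[fun ω => A ω * (Y ω) ^ 2 | MeasurableSpace.comap W inferInstance]
      ≤ᵐ[P] P[fun _ => (1:ℝ) | MeasurableSpace.comap W inferInstance] := by
    refine condExp_mono hAY2 (integrable_const 1) (Filter.Eventually.of_forall fun ω => ?_)
    show A ω * Y ω ^ 2 ≤ (1:ℝ)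
    have hy := hYr ω
    simp only [Set.mem_Icc] at hy
    rcases hAbin ω with h | h <;> rw [h] <;> nlinarith
  have hconst : P[fun _ => (1:ℝ) | MeasurableSpace.comap W inferInstance]
      = fun _ => (1:ℝ) := condExp_const hW.comap_le 1
  filter_upwards [hs, hmono] with ω h1 h2
  rw [hconst] at h2
  have h3 : (s (Q0 (W ω)) + Q0 (W ω) ^ 2) * G0 (W ω) ≤ 1 := by
    rw [h1]; exact h2
  have hg := hG0r (W ω)
  have hq := hQ0r (W ω)
  simp only [Set.mem_Icc] at hg hq
  have hs' := hs0 (Q0 (W ω))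
  rw [le_div_iff₀ hδ]
  nlinarith

lemma SEVD_decomp {Ω 𝓦 : Type*} [MeasurableSpace Ω] [MeasurableSpace 𝓦]
    (P : Measure Ω) [IsProbabilityMeasure P]
    (W : Ω → 𝓦) (A Y : Ω → ℝ)
    (hW : Measurable W) (hA : Measurable A) (hY : Measurable Y)
    (hAbin : ∀ ω, A ω = 0 ∨ A ω = 1) (hYr : ∀ ω, Y ω ∈ Set.Icc (0:ℝ) 1)
    (δ : ℝ) (hδ : 0 < δ)
    (G0 Q0 : 𝓦 → ℝ) (hG0m : Measurable G0) (hQ0m : Measurable Q0)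
    (hG0 : (fun ω => G0 (W ω)) =ᵐ[P] P[A | MeasurableSpace.comap W inferInstance])
    (hG0r : ∀ w, G0 w ∈ Set.Icc δ 1)
    (hQ0G0 : (fun ω => Q0 (W ω) * G0 (W ω))
        =ᵐ[P] P[fun ω => A ω * Y ω | MeasurableSpace.comap W inferInstance])
    (hQ0r : ∀ w, Q0 w ∈ Set.Icc (0:ℝ) 1)
    (s : ℝ → ℝ) (hsm : Measurable s) (hs0 : ∀ x, 0 ≤ s x)
    (hs : (fun ω => (s (Q0 (W ω)) + (Q0 (W ω)) ^ 2) * G0 (W ω))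
        =ᵐ[P] P[fun ω => A ω * (Y ω) ^ 2 | MeasurableSpace.comap W inferInstance])
    (g : Ω → ℝ) (hgm : Measurable[MeasurableSpace.comap W inferInstance] g)
    (hgr : ∀ ω, g ω ∈ Set.Icc δ 1) :
    ∫ ω, (A ω / g ω * (Y ω - Q0 (W ω)) + Q0 (W ω) - ∫ ω', Q0 (W ω') ∂P) ^ 2 ∂P
      = (∫ ω, s (Q0 (W ω)) * G0 (W ω) / g ω ^ 2 ∂P)
        + ∫ ω, (Q0 (W ω) - ∫ ω', Q0 (W ω') ∂P) ^ 2 ∂P := by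
  have hm : MeasurableSpace.comap W inferInstance ≤ _ := hW.comap_le
  have hmW : Measurable[MeasurableSpace.comap W inferInstance] W :=
    measurable_iff_comap_le.mpr le_rfl
  have hqm : Measurable[MeasurableSpace.comap W inferInstance] (fun ω => Q0 (W ω)) :=
    hQ0m.comp hmW
  have hgm0 : Measurable g := hgm.mono hm le_rfl
  have hqW0 : Measurable (fun ω => Q0 (W ω)) := hQ0m.comp hW
  have hGW0 : Measurable (fun ω => G0 (W ω)) := hG0m.comp hW
  have hsW0 : Measurable (fun ω => s (Q0 (W ω))) := hsm.comp hqW0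
  set μc := ∫ ω', Q0 (W ω') ∂P with hμcdef
  -- pointwise facts
  have hA01 : ∀ ω, 0 ≤ A ω ∧ A ω ≤ 1 := fun ω => by
    rcases hAbin ω with h | h <;> rw [h] <;> norm_num
  have hY01 : ∀ ω, 0 ≤ Y ω ∧ Y ω ≤ 1 := fun ω => Set.mem_Icc.mp (hYr ω)
  have hq01 : ∀ ω, 0 ≤ Q0 (W ω) ∧ Q0 (W ω) ≤ 1 := fun ω => Set.mem_Icc.mp (hQ0r (W ω))
  have hgδ : ∀ ω, δ ≤ g ω ∧ g ω ≤ 1 := fun ω => Set.mem_Icc.mp (hgr ω)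
  have hGδ : ∀ ω, δ ≤ G0 (W ω) ∧ G0 (W ω) ≤ 1 := fun ω => Set.mem_Icc.mp (hG0r (W ω))
  have iq : Integrable (fun ω => Q0 (W ω)) P :=
    SEVD_intg P hqW0.aestronglyMeasurable (C := 1)
      (Filter.Eventually.of_forall fun ω =>
        abs_le.mpr ⟨by linarith [(hq01 ω).1], (hq01 ω).2⟩)
  have hμb : |μc| ≤ 1 := by
    calc |μc| ≤ ∫ ω, |Q0 (W ω)| ∂P := by
          simpa [Real.norm_eq_abs] using
            norm_integral_le_integral_norm (μ := P) (fun ω => Q0 (W ω))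
      _ ≤ ∫ _ω, (1:ℝ) ∂P := integral_mono iq.abs (integrable_const 1)
            (fun ω => abs_le.mpr ⟨by linarith [(hq01 ω).1], (hq01 ω).2⟩)
      _ = 1 := by simp
  have hμ1 : -1 ≤ μc := by have := abs_le.mp hμb; linarith [this.1]
  have hμ2 : μc ≤ 1 := (abs_le.mp hμb).2
  -- abs bounds
  have habsA : ∀ ω, |A ω| ≤ 1 := fun ω => abs_le.mpr ⟨by linarith [(hA01 ω).1], (hA01 ω).2⟩
  have habsY : ∀ ω, |Y ω| ≤ 1 := fun ω => abs_le.mpr ⟨by linarith [(hY01 ω).1], (hY01 ω).2⟩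
  have habsq : ∀ ω, |Q0 (W ω)| ≤ 1 := fun ω =>
    abs_le.mpr ⟨by linarith [(hq01 ω).1], (hq01 ω).2⟩
  have habsG : ∀ ω, |G0 (W ω)| ≤ 1 := fun ω =>
    abs_le.mpr ⟨by linarith [(hGδ ω).1, hδ], (hGδ ω).2⟩
  have habsY2 : ∀ ω, |Y ω ^ 2| ≤ 1 := fun ω => by
    have h := abs_le.mp (habsY ω); rw [abs_le]; constructor <;> nlinarith
  have habsq2 : ∀ ω, |Q0 (W ω) ^ 2| ≤ 1 := fun ω => by
    have h := abs_le.mp (habsq ω); rw [abs_le]; constructor <;> nlinarith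
  have habsYq : ∀ ω, |Y ω - Q0 (W ω)| ≤ 1 := fun ω =>
    abs_le.mpr ⟨by linarith [(hY01 ω).1, (hq01 ω).2], by linarith [(hY01 ω).2, (hq01 ω).1]⟩
  have habsYq2 : ∀ ω, |(Y ω - Q0 (W ω)) ^ 2| ≤ 1 := fun ω => by
    have h := abs_le.mp (habsYq ω); rw [abs_le]; constructor <;> nlinarith
  have habs2q : ∀ ω, |2 * Q0 (W ω)| ≤ 2 := fun ω => by
    have h := abs_le.mp (habsq ω); rw [abs_le]; constructor <;> linarith
  have habsqμ : ∀ ω, |2 * (Q0 (W ω) - μc)| ≤ 4 := fun ω => by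
    rw [abs_le]; constructor <;> [nlinarith [(hq01 ω).2, (hq01 ω).1]; nlinarith [(hq01 ω).2, (hq01 ω).1]]
  have hsb := SEVD_s_bound P W A Y hW hA hY hAbin hYr δ hδ G0 Q0 hG0r hQ0r s hs0 hs
  -- integrabilities
  have iA : Integrable A P :=
    SEVD_intg P hA.aestronglyMeasurable (Filter.Eventually.of_forall habsA)
  have iAY : Integrable (fun ω => A ω * Y ω) P :=
    SEVD_intg P (hA.mul hY).aestronglyMeasurable
      (Filter.Eventually.of_forall fun ω => SEVD_abs_mul (habsA ω) (habsY ω))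
  have iAY2 : Integrable (fun ω => A ω * Y ω ^ 2) P :=
    SEVD_intg P (hA.mul (hY.pow_const 2)).aestronglyMeasurable
      (Filter.Eventually.of_forall fun ω => SEVD_abs_mul (habsA ω) (habsY2 ω))
  have iu1 : Integrable (fun ω => 1 / g ω ^ 2 * (A ω * Y ω ^ 2)) P := by
    refine SEVD_intg P ((measurable_const.div (hgm0.pow_const 2)).mul
      (hA.mul (hY.pow_const 2))).aestronglyMeasurable (C := (1*1)/δ^2)
      (Filter.Eventually.of_forall fun ω => ?_)
    rw [show 1 / g ω ^ 2 * (A ω * Y ω ^ 2) = (A ω * Y ω ^ 2) / g ω ^ 2 from by ring]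
    exact SEVD_bnd_div2 hδ (hgδ ω).1 (SEVD_abs_mul (habsA ω) (habsY2 ω))
  have iu2 : Integrable (fun ω => 1 / g ω ^ 2 * (2 * Q0 (W ω)) * (A ω * Y ω)) P := by
    refine SEVD_intg P (((measurable_const.div (hgm0.pow_const 2)).mul
      (measurable_const.mul hqW0)).mul (hA.mul hY)).aestronglyMeasurable (C := (2*(1*1))/δ^2)
      (Filter.Eventually.of_forall fun ω => ?_)
    rw [show 1 / g ω ^ 2 * (2 * Q0 (W ω)) * (A ω * Y ω)
        = (2 * Q0 (W ω) * (A ω * Y ω)) / g ω ^ 2 from by ring]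
    exact SEVD_bnd_div2 hδ (hgδ ω).1 (SEVD_abs_mul (habs2q ω) (SEVD_abs_mul (habsA ω) (habsY ω)))
  have iu3 : Integrable (fun ω => 1 / g ω ^ 2 * Q0 (W ω) ^ 2 * A ω) P := by
    refine SEVD_intg P (((measurable_const.div (hgm0.pow_const 2)).mul
      (hqW0.pow_const 2)).mul hA).aestronglyMeasurable (C := (1*1)/δ^2)
      (Filter.Eventually.of_forall fun ω => ?_)
    rw [show 1 / g ω ^ 2 * Q0 (W ω) ^ 2 * A ω = (Q0 (W ω) ^ 2 * A ω) / g ω ^ 2 from by ring]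
    exact SEVD_bnd_div2 hδ (hgδ ω).1 (SEVD_abs_mul (habsq2 ω) (habsA ω))
  have iv1 : Integrable
      (fun ω => 1 / g ω ^ 2 * ((s (Q0 (W ω)) + Q0 (W ω) ^ 2) * G0 (W ω))) P := by
    refine SEVD_intg P ((measurable_const.div (hgm0.pow_const 2)).mul
      ((hsW0.add (hqW0.pow_const 2)).mul hGW0)).aestronglyMeasurable (C := ((1/δ+1)*1)/δ^2) ?_
    filter_upwards [hsb] with ω hsω
    rw [show 1 / g ω ^ 2 * ((s (Q0 (W ω)) + Q0 (W ω) ^ 2) * G0 (W ω))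
        = ((s (Q0 (W ω)) + Q0 (W ω) ^ 2) * G0 (W ω)) / g ω ^ 2 from by ring]
    refine SEVD_bnd_div2 hδ (hgδ ω).1 (SEVD_abs_mul ?_ (habsG ω))
    have h1 : (0:ℝ) ≤ 1 / δ := by positivity
    have h2 := abs_le.mp (habsq2 ω)
    exact abs_le.mpr ⟨by linarith [hs0 (Q0 (W ω))], by linarith⟩
  have iv2 : Integrable (fun ω => 1 / g ω ^ 2 * (2 * Q0 (W ω)) * (Q0 (W ω) * G0 (W ω))) P := by
    refine SEVD_intg P (((measurable_const.div (hgm0.pow_const 2)).mul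
      (measurable_const.mul hqW0)).mul (hqW0.mul hGW0)).aestronglyMeasurable (C := (2*(1*1))/δ^2)
      (Filter.Eventually.of_forall fun ω => ?_)
    rw [show 1 / g ω ^ 2 * (2 * Q0 (W ω)) * (Q0 (W ω) * G0 (W ω))
        = (2 * Q0 (W ω) * (Q0 (W ω) * G0 (W ω))) / g ω ^ 2 from by ring]
    exact SEVD_bnd_div2 hδ (hgδ ω).1
      (SEVD_abs_mul (habs2q ω) (SEVD_abs_mul (habsq ω) (habsG ω)))
  have iv3 : Integrable (fun ω => 1 / g ω ^ 2 * Q0 (W ω) ^ 2 * G0 (W ω)) P := by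
    refine SEVD_intg P (((measurable_const.div (hgm0.pow_const 2)).mul
      (hqW0.pow_const 2)).mul hGW0).aestronglyMeasurable (C := (1*1)/δ^2)
      (Filter.Eventually.of_forall fun ω => ?_)
    rw [show 1 / g ω ^ 2 * Q0 (W ω) ^ 2 * G0 (W ω)
        = (Q0 (W ω) ^ 2 * G0 (W ω)) / g ω ^ 2 from by ring]
    exact SEVD_bnd_div2 hδ (hgδ ω).1 (SEVD_abs_mul (habsq2 ω) (habsG ω))
  have iw1 : Integrable (fun ω => 2 * (Q0 (W ω) - μc) / g ω * (A ω * Y ω)) P := by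
    refine SEVD_intg P (((measurable_const.mul (hqW0.sub measurable_const)).div hgm0).mul
      (hA.mul hY)).aestronglyMeasurable (C := (4*(1*1))/δ) (Filter.Eventually.of_forall fun ω => ?_)
    rw [show 2 * (Q0 (W ω) - μc) / g ω * (A ω * Y ω)
        = (2 * (Q0 (W ω) - μc) * (A ω * Y ω)) / g ω from by ring]
    exact SEVD_bnd_div hδ (hgδ ω).1 (SEVD_abs_mul (habsqμ ω) (SEVD_abs_mul (habsA ω) (habsY ω)))
  have iw2 : Integrable (fun ω => 2 * (Q0 (W ω) - μc) / g ω * Q0 (W ω) * A ω) P := by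
    refine SEVD_intg P ((((measurable_const.mul (hqW0.sub measurable_const)).div hgm0).mul
      hqW0).mul hA).aestronglyMeasurable (C := (4*1*1)/δ) (Filter.Eventually.of_forall fun ω => ?_)
    rw [show 2 * (Q0 (W ω) - μc) / g ω * Q0 (W ω) * A ω
        = (2 * (Q0 (W ω) - μc) * Q0 (W ω) * A ω) / g ω from by ring]
    exact SEVD_bnd_div hδ (hgδ ω).1
      (SEVD_abs_mul (SEVD_abs_mul (habsqμ ω) (habsq ω)) (habsA ω))
  have iT1 : Integrable (fun ω => A ω * (Y ω - Q0 (W ω)) ^ 2 / g ω ^ 2) P := by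
    refine SEVD_intg P (((hA.mul ((hY.sub hqW0).pow_const 2)).div
      (hgm0.pow_const 2))).aestronglyMeasurable (C := (1*1)/δ^2) (Filter.Eventually.of_forall fun ω => ?_)
    exact SEVD_bnd_div2 hδ (hgδ ω).1 (SEVD_abs_mul (habsA ω) (habsYq2 ω))
  have iT2 : Integrable (fun ω => 2 * (Q0 (W ω) - μc) / g ω * (A ω * (Y ω - Q0 (W ω)))) P := by
    refine SEVD_intg P (((measurable_const.mul (hqW0.sub measurable_const)).div hgm0).mul
      (hA.mul (hY.sub hqW0))).aestronglyMeasurable (C := (4*(1*1))/δ) (Filter.Eventually.of_forall fun ω => ?_)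
    rw [show 2 * (Q0 (W ω) - μc) / g ω * (A ω * (Y ω - Q0 (W ω)))
        = (2 * (Q0 (W ω) - μc) * (A ω * (Y ω - Q0 (W ω)))) / g ω from by ring]
    exact SEVD_bnd_div hδ (hgδ ω).1
      (SEVD_abs_mul (habsqμ ω) (SEVD_abs_mul (habsA ω) (habsYq ω)))
  have iT3 : Integrable (fun ω => (Q0 (W ω) - μc) ^ 2) P := by
    refine SEVD_intg P ((hqW0.sub measurable_const).pow_const 2).aestronglyMeasurable
      (Filter.Eventually.of_forall fun ω => ?_) (C := 9)
    have h1 := (hq01 ω).1; have h2 := (hq01 ω).2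
    rw [abs_le]; constructor <;> nlinarith
  -- strongly measurable multipliers
  have hsm_h2 : StronglyMeasurable[MeasurableSpace.comap W inferInstance]
      (fun ω => 1 / g ω ^ 2) :=
    (measurable_const.div (hgm.pow_const 2)).stronglyMeasurable
  have hsm_h2q : StronglyMeasurable[MeasurableSpace.comap W inferInstance]
      (fun ω => 1 / g ω ^ 2 * (2 * Q0 (W ω))) :=
    ((measurable_const.div (hgm.pow_const 2)).mul
      (measurable_const.mul hqm)).stronglyMeasurable
  have hsm_h2q2 : StronglyMeasurable[MeasurableSpace.comap W inferInstance]
      (fun ω => 1 / g ω ^ 2 * Q0 (W ω) ^ 2) :=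
    ((measurable_const.div (hgm.pow_const 2)).mul (hqm.pow_const 2)).stronglyMeasurable
  have hsm_h1 : StronglyMeasurable[MeasurableSpace.comap W inferInstance]
      (fun ω => 2 * (Q0 (W ω) - μc) / g ω) :=
    ((measurable_const.mul (hqm.sub measurable_const)).div hgm).stronglyMeasurable
  have hsm_h1q : StronglyMeasurable[MeasurableSpace.comap W inferInstance]
      (fun ω => 2 * (Q0 (W ω) - μc) / g ω * Q0 (W ω)) :=
    (((measurable_const.mul (hqm.sub measurable_const)).div hgm).mul hqm).stronglyMeasurable
  -- key identities
  have e1 := SEVD_key hm P hsm_h2 iu1 iAY2 hs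
  have e2 := SEVD_key hm P hsm_h2q iu2 iAY hQ0G0
  have e3 := SEVD_key hm P hsm_h2q2 iu3 iA hG0
  have e4 := SEVD_key hm P hsm_h1 iw1 iAY hQ0G0
  have e5 := SEVD_key hm P hsm_h1q iw2 iA hG0
  -- the T1 identity
  have eT1 : ∫ ω, A ω * (Y ω - Q0 (W ω)) ^ 2 / g ω ^ 2 ∂P
      = ∫ ω, s (Q0 (W ω)) * G0 (W ω) / g ω ^ 2 ∂P := by
    calc ∫ ω, A ω * (Y ω - Q0 (W ω)) ^ 2 / g ω ^ 2 ∂P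
        = ∫ ω, (1 / g ω ^ 2 * (A ω * Y ω ^ 2)
            - 1 / g ω ^ 2 * (2 * Q0 (W ω)) * (A ω * Y ω)
            + 1 / g ω ^ 2 * Q0 (W ω) ^ 2 * A ω) ∂P :=
          integral_congr_ae (Filter.Eventually.of_forall fun ω => by ring)
      _ = (∫ ω, 1 / g ω ^ 2 * (A ω * Y ω ^ 2) ∂P)
            - (∫ ω, 1 / g ω ^ 2 * (2 * Q0 (W ω)) * (A ω * Y ω) ∂P)
            + ∫ ω, 1 / g ω ^ 2 * Q0 (W ω) ^ 2 * A ω ∂P := by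
          have a1 : ∫ ω, (1 / g ω ^ 2 * (A ω * Y ω ^ 2)
              - 1 / g ω ^ 2 * (2 * Q0 (W ω)) * (A ω * Y ω)
              + 1 / g ω ^ 2 * Q0 (W ω) ^ 2 * A ω) ∂P
              = (∫ ω, (1 / g ω ^ 2 * (A ω * Y ω ^ 2)
                - 1 / g ω ^ 2 * (2 * Q0 (W ω)) * (A ω * Y ω)) ∂P)
                + ∫ ω, 1 / g ω ^ 2 * Q0 (W ω) ^ 2 * A ω ∂P :=
            integral_add (iu1.sub iu2) iu3
          have a2 : ∫ ω, (1 / g ω ^ 2 * (A ω * Y ω ^ 2)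
              - 1 / g ω ^ 2 * (2 * Q0 (W ω)) * (A ω * Y ω)) ∂P
              = (∫ ω, 1 / g ω ^ 2 * (A ω * Y ω ^ 2) ∂P)
                - ∫ ω, 1 / g ω ^ 2 * (2 * Q0 (W ω)) * (A ω * Y ω) ∂P :=
            integral_sub iu1 iu2
          rw [a1, a2]
      _ = (∫ ω, 1 / g ω ^ 2 * ((s (Q0 (W ω)) + Q0 (W ω) ^ 2) * G0 (W ω)) ∂P)
            - (∫ ω, 1 / g ω ^ 2 * (2 * Q0 (W ω)) * (Q0 (W ω) * G0 (W ω)) ∂P)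
            + ∫ ω, 1 / g ω ^ 2 * Q0 (W ω) ^ 2 * G0 (W ω) ∂P := by
          rw [e1, e2, e3]
      _ = ∫ ω, (1 / g ω ^ 2 * ((s (Q0 (W ω)) + Q0 (W ω) ^ 2) * G0 (W ω))
            - 1 / g ω ^ 2 * (2 * Q0 (W ω)) * (Q0 (W ω) * G0 (W ω))
            + 1 / g ω ^ 2 * Q0 (W ω) ^ 2 * G0 (W ω)) ∂P := by
          have a1 : ∫ ω, (1 / g ω ^ 2 * ((s (Q0 (W ω)) + Q0 (W ω) ^ 2) * G0 (W ω))
              - 1 / g ω ^ 2 * (2 * Q0 (W ω)) * (Q0 (W ω) * G0 (W ω))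
              + 1 / g ω ^ 2 * Q0 (W ω) ^ 2 * G0 (W ω)) ∂P
              = (∫ ω, (1 / g ω ^ 2 * ((s (Q0 (W ω)) + Q0 (W ω) ^ 2) * G0 (W ω))
                - 1 / g ω ^ 2 * (2 * Q0 (W ω)) * (Q0 (W ω) * G0 (W ω))) ∂P)
                + ∫ ω, 1 / g ω ^ 2 * Q0 (W ω) ^ 2 * G0 (W ω) ∂P :=
            integral_add (iv1.sub iv2) iv3
          have a2 : ∫ ω, (1 / g ω ^ 2 * ((s (Q0 (W ω)) + Q0 (W ω) ^ 2) * G0 (W ω))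
              - 1 / g ω ^ 2 * (2 * Q0 (W ω)) * (Q0 (W ω) * G0 (W ω))) ∂P
              = (∫ ω, 1 / g ω ^ 2 * ((s (Q0 (W ω)) + Q0 (W ω) ^ 2) * G0 (W ω)) ∂P)
                - ∫ ω, 1 / g ω ^ 2 * (2 * Q0 (W ω)) * (Q0 (W ω) * G0 (W ω)) ∂P :=
            integral_sub iv1 iv2
          rw [a1, a2]
      _ = ∫ ω, s (Q0 (W ω)) * G0 (W ω) / g ω ^ 2 ∂P :=
          integral_congr_ae (Filter.Eventually.of_forall fun ω => by ring)
  -- the T2 identity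
  have eT2 : ∫ ω, 2 * (Q0 (W ω) - μc) / g ω * (A ω * (Y ω - Q0 (W ω))) ∂P = 0 := by
    calc ∫ ω, 2 * (Q0 (W ω) - μc) / g ω * (A ω * (Y ω - Q0 (W ω))) ∂P
        = ∫ ω, (2 * (Q0 (W ω) - μc) / g ω * (A ω * Y ω)
            - 2 * (Q0 (W ω) - μc) / g ω * Q0 (W ω) * A ω) ∂P :=
          integral_congr_ae (Filter.Eventually.of_forall fun ω => by ring)
      _ = (∫ ω, 2 * (Q0 (W ω) - μc) / g ω * (A ω * Y ω) ∂P)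
            - ∫ ω, 2 * (Q0 (W ω) - μc) / g ω * Q0 (W ω) * A ω ∂P := integral_sub iw1 iw2
      _ = 0 := by
          rw [e4, e5, sub_eq_zero]
          exact integral_congr_ae (Filter.Eventually.of_forall fun ω => by ring)
  -- main expansion
  have main : ∀ ω, (A ω / g ω * (Y ω - Q0 (W ω)) + Q0 (W ω) - μc) ^ 2
      = A ω * (Y ω - Q0 (W ω)) ^ 2 / g ω ^ 2
        + 2 * (Q0 (W ω) - μc) / g ω * (A ω * (Y ω - Q0 (W ω)))
        + (Q0 (W ω) - μc) ^ 2 := fun ω => by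
    rcases hAbin ω with h | h <;> rw [h] <;> ring
  calc ∫ ω, (A ω / g ω * (Y ω - Q0 (W ω)) + Q0 (W ω) - μc) ^ 2 ∂P
      = ∫ ω, (A ω * (Y ω - Q0 (W ω)) ^ 2 / g ω ^ 2
          + 2 * (Q0 (W ω) - μc) / g ω * (A ω * (Y ω - Q0 (W ω)))
          + (Q0 (W ω) - μc) ^ 2) ∂P :=
        integral_congr_ae (Filter.Eventually.of_forall fun ω => main ω)
    _ = (∫ ω, A ω * (Y ω - Q0 (W ω)) ^ 2 / g ω ^ 2 ∂P)
          + (∫ ω, 2 * (Q0 (W ω) - μc) / g ω * (A ω * (Y ω - Q0 (W ω))) ∂P)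
          + ∫ ω, (Q0 (W ω) - μc) ^ 2 ∂P := by
        have a1 : ∫ ω, (A ω * (Y ω - Q0 (W ω)) ^ 2 / g ω ^ 2
            + 2 * (Q0 (W ω) - μc) / g ω * (A ω * (Y ω - Q0 (W ω)))
            + (Q0 (W ω) - μc) ^ 2) ∂P
            = (∫ ω, (A ω * (Y ω - Q0 (W ω)) ^ 2 / g ω ^ 2
              + 2 * (Q0 (W ω) - μc) / g ω * (A ω * (Y ω - Q0 (W ω)))) ∂P)
              + ∫ ω, (Q0 (W ω) - μc) ^ 2 ∂P :=
          integral_add (iT1.add iT2) iT3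
        have a2 : ∫ ω, (A ω * (Y ω - Q0 (W ω)) ^ 2 / g ω ^ 2
            + 2 * (Q0 (W ω) - μc) / g ω * (A ω * (Y ω - Q0 (W ω)))) ∂P
            = (∫ ω, A ω * (Y ω - Q0 (W ω)) ^ 2 / g ω ^ 2 ∂P)
              + ∫ ω, 2 * (Q0 (W ω) - μc) / g ω * (A ω * (Y ω - Q0 (W ω))) ∂P :=
          integral_add iT1 iT2
        rw [a1, a2]
    _ = (∫ ω, s (Q0 (W ω)) * G0 (W ω) / g ω ^ 2 ∂P) + ∫ ω, (Q0 (W ω) - μc) ^ 2 ∂P := by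
        rw [eT1, eT2]; ring

/-- Variance inequality for asymptotic super-efficiency (homoscedastic-within-strata case):
if `σ²(w) = Var(Y | A = 1, W = w)` is `σ(Q̄₀(W))`-measurable, then
`τ₀² = E[σ²(W)/Ḡ₀(W|Q̄₀)] + Var(Q̄₀(W)) ≤ E[σ²(W)/Ḡ₀(W)] + Var(Q̄₀(W)) = σ₀²`,
where `τ₀²`, `σ₀²` are the variances of the EIF evaluated with the adaptive propensity
`Ḡ₀(·|Q̄₀) = E[Ḡ₀(W)|Q̄₀(W)]` and the full propensity `Ḡ₀`, respectively. -/
theorem super_efficiency_variance_decomposition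
    {Ω 𝓦 : Type*} [MeasurableSpace Ω] [MeasurableSpace 𝓦]
    (P : Measure Ω) [IsProbabilityMeasure P]
    (W : Ω → 𝓦) (A Y : Ω → ℝ)
    (hW : Measurable W) (hA : Measurable A) (hY : Measurable Y)
    (hAbin : ∀ ω, A ω = 0 ∨ A ω = 1) (hYr : ∀ ω, Y ω ∈ Set.Icc (0:ℝ) 1)
    (δ : ℝ) (hδ : 0 < δ)
    (G0 Q0 : 𝓦 → ℝ) (hG0m : Measurable G0) (hQ0m : Measurable Q0)
    (hG0 : (fun ω => G0 (W ω)) =ᵐ[P] P[A | MeasurableSpace.comap W inferInstance])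
    (hG0r : ∀ w, G0 w ∈ Set.Icc δ 1)
    (hQ0G0 : (fun ω => Q0 (W ω) * G0 (W ω))
        =ᵐ[P] P[fun ω => A ω * Y ω | MeasurableSpace.comap W inferInstance])
    (hQ0r : ∀ w, Q0 w ∈ Set.Icc (0:ℝ) 1)
    -- σ²(w) = s(Q̄₀(w)) is σ(Q̄₀(W))-measurable: E[A Y² | W] = (σ² + Q̄₀²) Ḡ₀
    (s : ℝ → ℝ) (hsm : Measurable s) (hs0 : ∀ x, 0 ≤ s x)
    (hs : (fun ω => (s (Q0 (W ω)) + (Q0 (W ω)) ^ 2) * G0 (W ω))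
        =ᵐ[P] P[fun ω => A ω * (Y ω) ^ 2 | MeasurableSpace.comap W inferInstance])
    -- adaptive propensity Ḡ₀(·|Q̄₀) = E[Ḡ₀(W) | Q̄₀(W)]
    (Gq : ℝ → ℝ) (hGqm : Measurable Gq)
    (hGq : (fun ω => Gq (Q0 (W ω)))
        =ᵐ[P] P[fun ω => G0 (W ω) | MeasurableSpace.comap (fun ω => Q0 (W ω)) inferInstance])
    (hGqr : ∀ x, Gq x ∈ Set.Icc δ 1) :
    -- τ₀² = E[σ²/Ḡ₀(·|Q̄₀)] + Var(Q̄₀(W))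
    (∫ ω, (A ω / Gq (Q0 (W ω)) * (Y ω - Q0 (W ω)) + Q0 (W ω) - ∫ ω', Q0 (W ω') ∂P) ^ 2 ∂P
        = (∫ ω, s (Q0 (W ω)) / Gq (Q0 (W ω)) ∂P)
          + ∫ ω, (Q0 (W ω) - ∫ ω', Q0 (W ω') ∂P) ^ 2 ∂P)
    -- σ₀² = E[σ²/Ḡ₀] + Var(Q̄₀(W))
    ∧ (∫ ω, (A ω / G0 (W ω) * (Y ω - Q0 (W ω)) + Q0 (W ω) - ∫ ω', Q0 (W ω') ∂P) ^ 2 ∂P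
        = (∫ ω, s (Q0 (W ω)) / G0 (W ω) ∂P)
          + ∫ ω, (Q0 (W ω) - ∫ ω', Q0 (W ω') ∂P) ^ 2 ∂P)
    -- and τ₀² ≤ σ₀²
    ∧ ((∫ ω, s (Q0 (W ω)) / Gq (Q0 (W ω)) ∂P)
          + (∫ ω, (Q0 (W ω) - ∫ ω', Q0 (W ω') ∂P) ^ 2 ∂P)
        ≤ (∫ ω, s (Q0 (W ω)) / G0 (W ω) ∂P)
          + ∫ ω, (Q0 (W ω) - ∫ ω', Q0 (W ω') ∂P) ^ 2 ∂P) := by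
  have hmW : Measurable[MeasurableSpace.comap W inferInstance] W :=
    measurable_iff_comap_le.mpr le_rfl
  have hqW0 : Measurable (fun ω => Q0 (W ω)) := hQ0m.comp hW
  have hGW0 : Measurable (fun ω => G0 (W ω)) := hG0m.comp hW
  have hsW0 : Measurable (fun ω => s (Q0 (W ω))) := hsm.comp hqW0
  have hGqW0 : Measurable (fun ω => Gq (Q0 (W ω))) := hGqm.comp hqW0
  have hm' : MeasurableSpace.comap (fun ω => Q0 (W ω)) inferInstance ≤ _ := hqW0.comap_le
  have hmQ : Measurable[MeasurableSpace.comap (fun ω => Q0 (W ω)) inferInstance]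
      (fun ω => Q0 (W ω)) := measurable_iff_comap_le.mpr le_rfl
  have hsb := SEVD_s_bound P W A Y hW hA hY hAbin hYr δ hδ G0 Q0 hG0r hQ0r s hs0 hs
  have hGδ : ∀ ω, δ ≤ G0 (W ω) ∧ G0 (W ω) ≤ 1 := fun ω => Set.mem_Icc.mp (hG0r (W ω))
  have hGqδ : ∀ ω, δ ≤ Gq (Q0 (W ω)) ∧ Gq (Q0 (W ω)) ≤ 1 := fun ω =>
    Set.mem_Icc.mp (hGqr (Q0 (W ω)))
  have habsG : ∀ ω, |G0 (W ω)| ≤ 1 := fun ω =>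
    abs_le.mpr ⟨by linarith [(hGδ ω).1, hδ], (hGδ ω).2⟩
  have habs_s : ∀ᵐ ω ∂P, |s (Q0 (W ω))| ≤ 1 / δ := by
    filter_upwards [hsb] with ω hω
    have h1 : (0:ℝ) ≤ 1 / δ := by positivity
    exact abs_le.mpr ⟨by linarith [hs0 (Q0 (W ω))], hω⟩
  -- integrability facts
  have iG0W : Integrable (fun ω => G0 (W ω)) P :=
    SEVD_intg P hGW0.aestronglyMeasurable (Filter.Eventually.of_forall habsG)
  have ihf : Integrable (fun ω => s (Q0 (W ω)) / Gq (Q0 (W ω)) ^ 2 * G0 (W ω)) P := by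
    refine SEVD_intg P ((hsW0.div (hGqW0.pow_const 2)).mul hGW0).aestronglyMeasurable
      (C := (1/δ*1)/δ^2) ?_
    filter_upwards [habs_s] with ω hω
    rw [show s (Q0 (W ω)) / Gq (Q0 (W ω)) ^ 2 * G0 (W ω)
        = (s (Q0 (W ω)) * G0 (W ω)) / Gq (Q0 (W ω)) ^ 2 from by ring]
    exact SEVD_bnd_div2 hδ (hGqδ ω).1 (SEVD_abs_mul hω (habsG ω))
  have i_sGq : Integrable (fun ω => s (Q0 (W ω)) / Gq (Q0 (W ω))) P := by
    refine SEVD_intg P (hsW0.div hGqW0).aestronglyMeasurable (C := (1/δ)/δ) ?_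
    filter_upwards [habs_s] with ω hω
    exact SEVD_bnd_div hδ (hGqδ ω).1 hω
  have i_sG0 : Integrable (fun ω => s (Q0 (W ω)) / G0 (W ω)) P := by
    refine SEVD_intg P (hsW0.div hGW0).aestronglyMeasurable (C := (1/δ)/δ) ?_
    filter_upwards [habs_s] with ω hω
    exact SEVD_bnd_div hδ (hGδ ω).1 hω
  have i_sGGq2 : Integrable (fun ω => s (Q0 (W ω)) * G0 (W ω) / Gq (Q0 (W ω)) ^ 2) P := by
    refine SEVD_intg P ((hsW0.mul hGW0).div (hGqW0.pow_const 2)).aestronglyMeasurable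
      (C := (1/δ*1)/δ^2) ?_
    filter_upwards [habs_s] with ω hω
    exact SEVD_bnd_div2 hδ (hGqδ ω).1 (SEVD_abs_mul hω (habsG ω))
  -- the tower property
  have hh : StronglyMeasurable[MeasurableSpace.comap (fun ω => Q0 (W ω)) inferInstance]
      (fun ω => s (Q0 (W ω)) / Gq (Q0 (W ω)) ^ 2) :=
    ((hsm.comp hmQ).div ((hGqm.comp hmQ).pow_const 2)).stronglyMeasurable
  have tow0 := SEVD_key hm' P hh ihf iG0W hGq
  have tower : ∫ ω, s (Q0 (W ω)) * G0 (W ω) / Gq (Q0 (W ω)) ^ 2 ∂P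
      = ∫ ω, s (Q0 (W ω)) / Gq (Q0 (W ω)) ∂P := by
    calc ∫ ω, s (Q0 (W ω)) * G0 (W ω) / Gq (Q0 (W ω)) ^ 2 ∂P
        = ∫ ω, s (Q0 (W ω)) / Gq (Q0 (W ω)) ^ 2 * G0 (W ω) ∂P :=
          integral_congr_ae (Filter.Eventually.of_forall fun ω => by ring)
      _ = ∫ ω, s (Q0 (W ω)) / Gq (Q0 (W ω)) ^ 2 * Gq (Q0 (W ω)) ∂P := tow0
      _ = ∫ ω, s (Q0 (W ω)) / Gq (Q0 (W ω)) ∂P := by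
          refine integral_congr_ae (Filter.Eventually.of_forall fun ω => ?_)
          have h0 : Gq (Q0 (W ω)) ≠ 0 := ne_of_gt (lt_of_lt_of_le hδ (hGqδ ω).1)
          field_simp
  -- part 1
  have d1 := SEVD_decomp P W A Y hW hA hY hAbin hYr δ hδ G0 Q0 hG0m hQ0m hG0 hG0r hQ0G0
    hQ0r s hsm hs0 hs (fun ω => Gq (Q0 (W ω))) (hGqm.comp (hQ0m.comp hmW))
    (fun ω => hGqr (Q0 (W ω)))
  have part1 : ∫ ω, (A ω / Gq (Q0 (W ω)) * (Y ω - Q0 (W ω)) + Q0 (W ω)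
        - ∫ ω', Q0 (W ω') ∂P) ^ 2 ∂P
      = (∫ ω, s (Q0 (W ω)) / Gq (Q0 (W ω)) ∂P)
        + ∫ ω, (Q0 (W ω) - ∫ ω', Q0 (W ω') ∂P) ^ 2 ∂P := by
    calc ∫ ω, (A ω / Gq (Q0 (W ω)) * (Y ω - Q0 (W ω)) + Q0 (W ω)
            - ∫ ω', Q0 (W ω') ∂P) ^ 2 ∂P
        = (∫ ω, s (Q0 (W ω)) * G0 (W ω) / Gq (Q0 (W ω)) ^ 2 ∂P)
            + ∫ ω, (Q0 (W ω) - ∫ ω', Q0 (W ω') ∂P) ^ 2 ∂P := d1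
      _ = (∫ ω, s (Q0 (W ω)) / Gq (Q0 (W ω)) ∂P)
            + ∫ ω, (Q0 (W ω) - ∫ ω', Q0 (W ω') ∂P) ^ 2 ∂P := by rw [tower]
  -- part 2
  have d2 := SEVD_decomp P W A Y hW hA hY hAbin hYr δ hδ G0 Q0 hG0m hQ0m hG0 hG0r hQ0G0
    hQ0r s hsm hs0 hs (fun ω => G0 (W ω)) (hG0m.comp hmW) (fun ω => hG0r (W ω))
  have part2 : ∫ ω, (A ω / G0 (W ω) * (Y ω - Q0 (W ω)) + Q0 (W ω)
        - ∫ ω', Q0 (W ω') ∂P) ^ 2 ∂P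
      = (∫ ω, s (Q0 (W ω)) / G0 (W ω) ∂P)
        + ∫ ω, (Q0 (W ω) - ∫ ω', Q0 (W ω') ∂P) ^ 2 ∂P := by
    calc ∫ ω, (A ω / G0 (W ω) * (Y ω - Q0 (W ω)) + Q0 (W ω)
            - ∫ ω', Q0 (W ω') ∂P) ^ 2 ∂P
        = (∫ ω, s (Q0 (W ω)) * G0 (W ω) / G0 (W ω) ^ 2 ∂P)
            + ∫ ω, (Q0 (W ω) - ∫ ω', Q0 (W ω') ∂P) ^ 2 ∂P := d2
      _ = (∫ ω, s (Q0 (W ω)) / G0 (W ω) ∂P)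
            + ∫ ω, (Q0 (W ω) - ∫ ω', Q0 (W ω') ∂P) ^ 2 ∂P := by
          congr 1
          refine integral_congr_ae (Filter.Eventually.of_forall fun ω => ?_)
          have h0 : G0 (W ω) ≠ 0 := ne_of_gt (lt_of_lt_of_le hδ (hGδ ω).1)
          field_simp
  -- part 3 : the Jensen-type inequality
  have hpt : ∀ ω, 2 * (s (Q0 (W ω)) / Gq (Q0 (W ω)))
      - s (Q0 (W ω)) * G0 (W ω) / Gq (Q0 (W ω)) ^ 2 ≤ s (Q0 (W ω)) / G0 (W ω) := by
    intro ω
    have ha : (0:ℝ) < Gq (Q0 (W ω)) := lt_of_lt_of_le hδ (hGqδ ω).1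
    have hx : (0:ℝ) < G0 (W ω) := lt_of_lt_of_le hδ (hGδ ω).1
    have hss := hs0 (Q0 (W ω))
    have e : s (Q0 (W ω)) / G0 (W ω)
        - (2 * (s (Q0 (W ω)) / Gq (Q0 (W ω)))
          - s (Q0 (W ω)) * G0 (W ω) / Gq (Q0 (W ω)) ^ 2)
        = s (Q0 (W ω)) * (G0 (W ω) - Gq (Q0 (W ω))) ^ 2
            / (Gq (Q0 (W ω)) ^ 2 * G0 (W ω)) := by
      field_simp
      ring
    have hnn : 0 ≤ s (Q0 (W ω)) * (G0 (W ω) - Gq (Q0 (W ω))) ^ 2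
        / (Gq (Q0 (W ω)) ^ 2 * G0 (W ω)) := by positivity
    linarith [e ▸ hnn]
  have b1 : ∫ ω, (2 * (s (Q0 (W ω)) / Gq (Q0 (W ω)))
      - s (Q0 (W ω)) * G0 (W ω) / Gq (Q0 (W ω)) ^ 2) ∂P
      = (∫ ω, 2 * (s (Q0 (W ω)) / Gq (Q0 (W ω))) ∂P)
        - ∫ ω, s (Q0 (W ω)) * G0 (W ω) / Gq (Q0 (W ω)) ^ 2 ∂P :=
    integral_sub (i_sGq.const_mul 2) i_sGGq2
  have b2 : ∫ ω, 2 * (s (Q0 (W ω)) / Gq (Q0 (W ω))) ∂P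
      = 2 * ∫ ω, s (Q0 (W ω)) / Gq (Q0 (W ω)) ∂P :=
    integral_const_mul 2 _
  have b3 : ∫ ω, (2 * (s (Q0 (W ω)) / Gq (Q0 (W ω)))
      - s (Q0 (W ω)) * G0 (W ω) / Gq (Q0 (W ω)) ^ 2) ∂P
      ≤ ∫ ω, s (Q0 (W ω)) / G0 (W ω) ∂P :=
    integral_mono ((i_sGq.const_mul 2).sub i_sGGq2) i_sG0 hpt
  have keyineq : ∫ ω, s (Q0 (W ω)) / Gq (Q0 (W ω)) ∂P
      ≤ ∫ ω, s (Q0 (W ω)) / G0 (W ω) ∂P := by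
    rw [b1, b2, tower] at b3
    linarith
  exact ⟨part1, part2, add_le_add_left keyineq _⟩
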